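/- For all n ≥ 2, the minimum length of a word-representant of the graph K_n □ K₂ satisfies l(K_n □ K₂) ≤ 5n − 4. -/

import Mathlib

open SimpleGraph

variable {V : Type*}

/-- Two distinct letters `x` and `y` alternate in a word `w` if the subsequence of `w`
consisting of all occurrences of `x` and `y` is strictly alternating. -/
def Alternates [DecidableEq V] (x y : V) (w : List V) : Prop :=
  (w.filter (fun z => decide (z = x ∨ z = y))).Chain' (· ≠ ·)

/-- A word `w` represents the graph `G` if it contains every vertex at least once and
two distinct vertices are adjacent iff they alternate in `w`. -/
def Represents [DecidableEq V] (G : SimpleGraph V) (w : List V) : Prop :=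
  (∀ v : V, v ∈ w) ∧ ∀ x y : V, x ≠ y → (G.Adj x y ↔ Alternates x y w)

/-- A graph is word-representable if some word represents it. -/
def WordRepresentable [DecidableEq V] (G : SimpleGraph V) : Prop :=
  ∃ w : List V, Represents G w

/-- `l(G)`: the minimum length of a word-representant of `G`. -/
noncomputable def reprLen [DecidableEq V] (G : SimpleGraph V) : ℕ :=
  sInf {n | ∃ w : List V, Represents G w ∧ w.length = n}


namespace S12
open List

def W (n : ℕ) : List ℕ :=
  ((range (n-1)).flatMap fun k => [k, n+k]) ++ [n-1] ++ range (n-1) ++ [n+(n-1), n-1]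
    ++ ((range (n-2)).flatMap fun k => [n+k, k])

def q (x y : ℕ) : ℕ → Bool := fun z => decide (z = x ∨ z = y)

lemma filter_pair (x y a b : ℕ) :
    filter (q x y) [a, b] =
      (if a = x ∨ a = y then [a] else []) ++ (if b = x ∨ b = y then [b] else []) := by
  by_cases h1 : a = x ∨ a = y <;> by_cases h2 : b = x ∨ b = y <;>
    simp [q, filter_cons, h1, h2]

lemma filter_single (x y a : ℕ) :
    filter (q x y) [a] = if a = x ∨ a = y then [a] else [] := by
  by_cases h1 : a = x ∨ a = y <;> simp [q, filter_cons, h1]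

lemma fpair00 {x y a b : ℕ} (h1 : ¬(a = x ∨ a = y)) (h2 : ¬(b = x ∨ b = y)) :
    filter (q x y) [a, b] = [] := by rw [filter_pair, if_neg h1, if_neg h2]; rfl
lemma fpair10 {x y a b : ℕ} (h1 : a = x ∨ a = y) (h2 : ¬(b = x ∨ b = y)) :
    filter (q x y) [a, b] = [a] := by rw [filter_pair, if_pos h1, if_neg h2]; rfl
lemma fpair01 {x y a b : ℕ} (h1 : ¬(a = x ∨ a = y)) (h2 : b = x ∨ b = y) :
    filter (q x y) [a, b] = [b] := by rw [filter_pair, if_neg h1, if_pos h2]; rfl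
lemma fpair11 {x y a b : ℕ} (h1 : a = x ∨ a = y) (h2 : b = x ∨ b = y) :
    filter (q x y) [a, b] = [a, b] := by rw [filter_pair, if_pos h1, if_pos h2]; rfl
lemma fsing0 {x y a : ℕ} (h1 : ¬(a = x ∨ a = y)) :
    filter (q x y) [a] = [] := by rw [filter_single, if_neg h1]
lemma fsing1 {x y a : ℕ} (h1 : a = x ∨ a = y) :
    filter (q x y) [a] = [a] := by rw [filter_single, if_pos h1]

lemma range_flatMap_nil {α : Type*} (g : ℕ → List α) (m : ℕ) (h : ∀ k < m, g k = []) :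
    (range m).flatMap g = [] :=
  flatMap_eq_nil_iff.mpr fun x hx => h x (mem_range.mp hx)

lemma range_flatMap_one {α : Type*} (g : ℕ → List α) {i m : ℕ} (him : i < m)
    (h : ∀ k < m, k ≠ i → g k = []) : (range m).flatMap g = g i := by
  induction m with
  | zero => omega
  | succ m ih =>
    rw [range_succ, flatMap_append, flatMap_singleton]
    rcases Nat.lt_succ_iff_lt_or_eq.mp him with hlt | he
    · rw [ih hlt (fun k hk hki => h k (by omega) hki), h m (by omega) (by omega), append_nil]
    · subst he
      rw [range_flatMap_nil _ _ (fun k hk => h k (by omega) (by omega)), nil_append]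

lemma range_flatMap_two {α : Type*} (g : ℕ → List α) {i j m : ℕ} (hij : i < j) (hjm : j < m)
    (h : ∀ k < m, k ≠ i → k ≠ j → g k = []) : (range m).flatMap g = g i ++ g j := by
  induction m with
  | zero => omega
  | succ m ih =>
    rw [range_succ, flatMap_append, flatMap_singleton]
    rcases Nat.lt_succ_iff_lt_or_eq.mp hjm with hlt | he
    · rw [ih hlt (fun k hk h1 h2 => h k (by omega) h1 h2), h m (by omega) (by omega) (by omega),
        append_nil]
    · subst he
      rw [range_flatMap_one g hij (fun k hk hki => h k (by omega) hki (by omega))]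

lemma filter_W (n x y : ℕ) : filter (q x y) (W n) =
    ((range (n-1)).flatMap fun k => filter (q x y) [k, n+k]) ++ filter (q x y) [n-1]
    ++ ((range (n-1)).flatMap fun k => filter (q x y) [k]) ++ filter (q x y) [n+(n-1), n-1]
    ++ ((range (n-2)).flatMap fun k => filter (q x y) [n+k, k]) := by
  have hr : filter (q x y) (range (n-1)) = (range (n-1)).flatMap fun k => filter (q x y) [k] := by
    conv_lhs => rw [← flatMap_singleton' (range (n-1)), filter_flatMap]
  simp only [W, filter_append, filter_flatMap, hr]

lemma caseA {n i j : ℕ} (hn : 2 ≤ n) (hij : i < j) (hj : j < n) :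
    Chain' (· ≠ ·) (filter (q i j) (W n)) := by
  rw [filter_W]
  rcases Nat.lt_or_ge j (n-1) with hj1 | hj1
  · -- j < n-1
    rw [range_flatMap_two _ hij (by omega)
        (fun k hk h1 h2 => fpair00 (by omega) (by omega)),
      fpair10 (Or.inl rfl) (by omega), fpair10 (Or.inr rfl) (by omega),
      fsing0 (by omega),
      range_flatMap_two _ hij (by omega) (fun k hk h1 h2 => fsing0 (by omega)),
      fsing1 (Or.inl rfl), fsing1 (Or.inr rfl),
      fpair00 (by omega) (by omega)]
    rcases Nat.lt_or_ge j (n-2) with hj2 | hj2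
    · rw [range_flatMap_two _ hij (by omega)
          (fun k hk h1 h2 => fpair00 (by omega) (by omega)),
        fpair01 (by omega) (Or.inl rfl), fpair01 (by omega) (Or.inr rfl)]
      simp [List.Chain', List.isChain_cons_cons]; omega
    · -- j = n-2, so i < n-2
      rw [range_flatMap_one _ (show i < n-2 by omega)
          (fun k hk h1 => fpair00 (by omega) (by omega)),
        fpair01 (by omega) (Or.inl rfl)]
      simp [List.Chain', List.isChain_cons_cons]; omega
  · -- j = n-1
    have hje : j = n-1 := by omega
    rw [range_flatMap_one _ (show i < n-1 by omega)
        (fun k hk h1 => fpair00 (by omega) (by omega)),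
      fpair10 (Or.inl rfl) (by omega),
      fsing1 (Or.inr hje.symm),
      range_flatMap_one _ (show i < n-1 by omega) (fun k hk h1 => fsing0 (by omega)),
      fsing1 (Or.inl rfl),
      fpair01 (by omega) (Or.inr hje.symm)]
    rcases Nat.lt_or_ge i (n-2) with hi2 | hi2
    · rw [range_flatMap_one _ hi2 (fun k hk h1 => fpair00 (by omega) (by omega)),
        fpair01 (by omega) (Or.inl rfl)]
      simp [List.Chain', List.isChain_cons_cons]; omega
    · rw [range_flatMap_nil _ _ (fun k hk => fpair00 (by omega) (by omega))]
      simp [List.Chain', List.isChain_cons_cons]; omega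


lemma caseB {n i j : ℕ} (hn : 2 ≤ n) (hij : i < j) (hj : j < n) :
    Chain' (· ≠ ·) (filter (q (n+i) (n+j)) (W n)) := by
  rw [filter_W]
  rw [fsing0 (by omega),
    range_flatMap_nil (fun k => filter (q (n+i) (n+j)) [k]) (n-1)
      (fun k hk => fsing0 (by omega))]
  rcases Nat.lt_or_ge j (n-1) with hj1 | hj1
  · rw [range_flatMap_two _ hij (by omega)
        (fun k hk h1 h2 => fpair00 (by omega) (by omega)),
      fpair01 (by omega) (Or.inl rfl), fpair01 (by omega) (Or.inr rfl),
      fpair00 (by omega) (by omega)]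
    rcases Nat.lt_or_ge j (n-2) with hj2 | hj2
    · rw [range_flatMap_two _ hij (by omega)
          (fun k hk h1 h2 => fpair00 (by omega) (by omega)),
        fpair10 (Or.inl rfl) (by omega), fpair10 (Or.inr rfl) (by omega)]
      simp [List.Chain', List.isChain_cons_cons]; omega
    · rw [range_flatMap_one _ (show i < n-2 by omega)
          (fun k hk h1 => fpair00 (by omega) (by omega)),
        fpair10 (Or.inl rfl) (by omega)]
      simp [List.Chain', List.isChain_cons_cons]; omega
  · have hje : j = n-1 := by omega
    rw [range_flatMap_one _ (show i < n-1 by omega)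
        (fun k hk h1 => fpair00 (by omega) (by omega)),
      fpair01 (by omega) (Or.inl rfl),
      fpair10 (Or.inr (by omega)) (by omega)]
    rcases Nat.lt_or_ge i (n-2) with hi2 | hi2
    · rw [range_flatMap_one _ hi2 (fun k hk h1 => fpair00 (by omega) (by omega)),
        fpair10 (Or.inl rfl) (by omega)]
      simp [List.Chain', List.isChain_cons_cons]; omega
    · rw [range_flatMap_nil _ _ (fun k hk => fpair00 (by omega) (by omega))]
      simp [List.Chain', List.isChain_cons_cons]; omega

lemma caseC {n i : ℕ} (hn : 2 ≤ n) (hi : i < n) :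
    Chain' (· ≠ ·) (filter (q i (n+i)) (W n)) := by
  rw [filter_W]
  rcases Nat.lt_or_ge i (n-1) with hi1 | hi1
  · rw [range_flatMap_one _ hi1 (fun k hk h1 => fpair00 (by omega) (by omega)),
      fpair11 (Or.inl rfl) (Or.inr rfl),
      fsing0 (by omega),
      range_flatMap_one _ hi1 (fun k hk h1 => fsing0 (by omega)),
      fsing1 (Or.inl rfl),
      fpair00 (by omega) (by omega)]
    rcases Nat.lt_or_ge i (n-2) with hi2 | hi2
    · rw [range_flatMap_one _ hi2 (fun k hk h1 => fpair00 (by omega) (by omega)),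
        fpair11 (Or.inr rfl) (Or.inl rfl)]
      simp [List.Chain', List.isChain_cons_cons]; omega
    · rw [range_flatMap_nil _ _ (fun k hk => fpair00 (by omega) (by omega))]
      simp [List.Chain', List.isChain_cons_cons]; omega
  · have hie : i = n-1 := by omega
    rw [range_flatMap_nil _ _ (fun k hk => fpair00 (by omega) (by omega)),
      fsing1 (Or.inl (by omega)),
      range_flatMap_nil (fun k => filter (q i (n+i)) [k]) (n-1)
        (fun k hk => fsing0 (by omega)),
      fpair11 (Or.inr (by omega)) (Or.inl (by omega)),
      range_flatMap_nil _ _ (fun k hk => fpair00 (by omega) (by omega))]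
    simp [List.Chain', List.isChain_cons_cons]; omega

lemma caseD {n i j : ℕ} (hn : 2 ≤ n) (hi : i < n) (hj : j < n) (hij : i ≠ j) :
    ¬ Chain' (· ≠ ·) (filter (q i (n+j)) (W n)) := by
  rw [filter_W]
  rcases Nat.lt_or_ge i j with hlt | hge
  · -- i < j
    rcases Nat.lt_or_ge j (n-1) with hj1 | hj1
    · rw [range_flatMap_two _ hlt (by omega)
          (fun k hk h1 h2 => fpair00 (by omega) (by omega)),
        fpair10 (Or.inl rfl) (by omega), fpair01 (by omega) (Or.inr rfl),
        fsing0 (by omega),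
        range_flatMap_one _ (show i < n-1 by omega) (fun k hk h1 => fsing0 (by omega)),
        fsing1 (Or.inl rfl),
        fpair00 (by omega) (by omega)]
      rcases Nat.lt_or_ge j (n-2) with hj2 | hj2
      · rw [range_flatMap_two _ hlt (by omega)
            (fun k hk h1 h2 => fpair00 (by omega) (by omega)),
          fpair01 (by omega) (Or.inl rfl), fpair10 (Or.inr rfl) (by omega)]
        simp [List.Chain', List.isChain_cons_cons]
      · rw [range_flatMap_one _ (show i < n-2 by omega)
            (fun k hk h1 => fpair00 (by omega) (by omega)),
          fpair01 (by omega) (Or.inl rfl)]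
        simp [List.Chain', List.isChain_cons_cons]
    · -- j = n-1, i < n-1
      rw [range_flatMap_one _ (show i < n-1 by omega)
          (fun k hk h1 => fpair00 (by omega) (by omega)),
        fpair10 (Or.inl rfl) (by omega),
        fsing0 (by omega),
        range_flatMap_one _ (show i < n-1 by omega) (fun k hk h1 => fsing0 (by omega)),
        fsing1 (Or.inl rfl),
        fpair10 (Or.inr (by omega)) (by omega)]
      rcases Nat.lt_or_ge i (n-2) with hi2 | hi2
      · rw [range_flatMap_one _ hi2 (fun k hk h1 => fpair00 (by omega) (by omega)),
          fpair01 (by omega) (Or.inl rfl)]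
        simp [List.Chain', List.isChain_cons_cons]
      · rw [range_flatMap_nil _ _ (fun k hk => fpair00 (by omega) (by omega))]
        simp [List.Chain', List.isChain_cons_cons]
  · -- j < i
    have hlt : j < i := by omega
    rcases Nat.lt_or_ge i (n-1) with hi1 | hi1
    · rw [range_flatMap_two _ hlt (by omega)
          (fun k hk h1 h2 => fpair00 (by omega) (by omega)),
        fpair01 (by omega) (Or.inr rfl), fpair10 (Or.inl rfl) (by omega),
        fsing0 (by omega),
        range_flatMap_one _ hi1 (fun k hk h1 => fsing0 (by omega)),
        fsing1 (Or.inl rfl),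
        fpair00 (by omega) (by omega)]
      rcases Nat.lt_or_ge i (n-2) with hi2 | hi2
      · rw [range_flatMap_two _ hlt (by omega)
            (fun k hk h1 h2 => fpair00 (by omega) (by omega)),
          fpair10 (Or.inr rfl) (by omega), fpair01 (by omega) (Or.inl rfl)]
        simp [List.Chain', List.isChain_cons_cons]
      · rcases Nat.lt_or_ge j (n-2) with hj2 | hj2
        · rw [range_flatMap_one _ hj2 (fun k hk h1 => fpair00 (by omega) (by omega)),
            fpair10 (Or.inr rfl) (by omega)]
          simp [List.Chain', List.isChain_cons_cons]
        · rw [range_flatMap_nil _ _ (fun k hk => fpair00 (by omega) (by omega))]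
          simp [List.Chain', List.isChain_cons_cons]
    · -- i = n-1, j < n-1
      rw [range_flatMap_one _ (show j < n-1 by omega)
          (fun k hk h1 => fpair00 (by omega) (by omega)),
        fpair01 (by omega) (Or.inr rfl),
        fsing1 (Or.inl (by omega)),
        range_flatMap_nil (fun k => filter (q i (n+j)) [k]) (n-1)
          (fun k hk => fsing0 (by omega)),
        fpair01 (by omega) (Or.inl (by omega))]
      rcases Nat.lt_or_ge j (n-2) with hj2 | hj2
      · rw [range_flatMap_one _ hj2 (fun k hk h1 => fpair00 (by omega) (by omega)),
          fpair10 (Or.inr rfl) (by omega)]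
        simp [List.Chain', List.isChain_cons_cons]
      · rw [range_flatMap_nil _ _ (fun k hk => fpair00 (by omega) (by omega))]
        simp [List.Chain', List.isChain_cons_cons]


lemma q_symm (x y : ℕ) : q x y = q y x := by
  funext z; simp [q, or_comm]

lemma chainW_lt {n : ℕ} (hn : 2 ≤ n) {x y : ℕ} (hx : x < 2*n) (hy : y < 2*n) (hxy : x < y) :
    Chain' (· ≠ ·) (filter (q x y) (W n)) ↔
      ((x < n ∧ y < n) ∨ (n ≤ x ∧ n ≤ y) ∨ (x + n = y ∨ y + n = x)) := by
  rcases Nat.lt_or_ge y n with hyn | hyn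
  · exact iff_of_true (caseA hn hxy hyn) (Or.inl ⟨by omega, hyn⟩)
  · rcases Nat.lt_or_ge x n with hxn | hxn
    · obtain ⟨j, rfl⟩ : ∃ j, y = n + j := ⟨y - n, by omega⟩
      by_cases hjx : j = x
      · subst hjx
        exact iff_of_true (caseC hn hxn) (Or.inr (Or.inr (Or.inl (by omega))))
      · exact iff_of_false (caseD hn hxn (by omega) (Ne.symm hjx)) (by omega)
    · obtain ⟨i, rfl⟩ : ∃ i, x = n + i := ⟨x - n, by omega⟩
      obtain ⟨j, rfl⟩ : ∃ j, y = n + j := ⟨y - n, by omega⟩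
      exact iff_of_true (caseB hn (by omega) (by omega)) (Or.inr (Or.inl ⟨by omega, by omega⟩))

lemma chainW {n : ℕ} (hn : 2 ≤ n) {x y : ℕ} (hx : x < 2*n) (hy : y < 2*n) (hxy : x ≠ y) :
    Chain' (· ≠ ·) (filter (q x y) (W n)) ↔
      ((x < n ∧ y < n) ∨ (n ≤ x ∧ n ≤ y) ∨ (x + n = y ∨ y + n = x)) := by
  rcases Nat.lt_or_ge x y with h | h
  · exact chainW_lt hn hx hy h
  · rw [q_symm, chainW_lt hn hy hx (by omega)]
    omega

def dec (n : ℕ) [NeZero n] (k : ℕ) : Fin n × Fin 2 :=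
  (⟨k % n, Nat.mod_lt _ (Nat.pos_of_ne_zero (NeZero.ne n))⟩, ⟨(k / n) % 2, Nat.mod_lt _ (by omega)⟩)

def enc (n : ℕ) (v : Fin n × Fin 2) : ℕ := v.1.val + n * v.2.val

lemma enc_lt {n : ℕ} (v : Fin n × Fin 2) : enc n v < 2*n := by
  have h1 : v.1.val < n := v.1.isLt
  have h2 : v.2.val = 0 ∨ v.2.val = 1 := by have := v.2.isLt; omega
  unfold enc
  rcases h2 with h | h <;> rw [h] <;> omega

lemma dec_enc {n : ℕ} [NeZero n] (v : Fin n × Fin 2) : dec n (enc n v) = v := by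
  have h1 : v.1.val < n := v.1.isLt
  have h2 : v.2.val = 0 ∨ v.2.val = 1 := by have := v.2.isLt; omega
  have hn : 0 < n := Nat.pos_of_ne_zero (NeZero.ne n)
  unfold dec enc
  refine Prod.ext (Fin.ext ?_) (Fin.ext ?_) <;>
    rcases h2 with h | h <;> rw [h] <;>
      simp [Nat.mod_eq_of_lt h1, Nat.div_eq_of_lt h1, Nat.add_div_right _ hn]

lemma enc_dec {n : ℕ} [NeZero n] {k : ℕ} (hk : k < 2*n) : enc n (dec n k) = k := by
  have hn : 0 < n := Nat.pos_of_ne_zero (NeZero.ne n)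
  have hdiv : k / n < 2 := Nat.div_lt_of_lt_mul (by omega)
  unfold dec enc
  simp only
  rw [Nat.mod_eq_of_lt hdiv, Nat.mod_add_div]

lemma chain'_congr {α : Type*} {R S : α → α → Prop} :
    ∀ (l : List α), (∀ a ∈ l, ∀ b ∈ l, (R a b ↔ S a b)) → (l.Chain' R ↔ l.Chain' S) := by
  intro l
  induction l with
  | nil => simp [List.Chain']
  | cons a t ih =>
    intro h
    cases t with
    | nil => simp [List.Chain']
    | cons b t' =>
      simp only [List.Chain'] at ih ⊢
      rw [List.isChain_cons_cons, List.isChain_cons_cons, h a (by simp) b (by simp),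
        ih (fun x hx y hy => h x (List.mem_cons_of_mem _ hx) y (List.mem_cons_of_mem _ hy))]

lemma W_lt {n : ℕ} (hn : 2 ≤ n) : ∀ k ∈ W n, k < 2*n := by
  intro k hk
  simp only [W, mem_append, mem_flatMap, mem_range, mem_cons, mem_singleton,
    not_mem_nil, or_false] at hk
  rcases hk with ((((⟨a, ha, h⟩ | h) | h) | h) | ⟨a, ha, h⟩) <;> omega

lemma W_mem {n : ℕ} (hn : 2 ≤ n) {k : ℕ} (hk : k < 2*n) : k ∈ W n := by
  simp only [W, mem_append, mem_flatMap, mem_range, mem_cons, mem_singleton,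
    not_mem_nil, or_false]
  rcases Nat.lt_or_ge k n with h | h
  · rcases Nat.lt_or_ge k (n-1) with h2 | h2
    · exact Or.inl (Or.inl (Or.inr h2))
    · exact Or.inl (Or.inl (Or.inl (Or.inr (by omega))))
  · rcases Nat.lt_or_ge (k - n) (n-1) with h2 | h2
    · exact Or.inl (Or.inl (Or.inl (Or.inl ⟨k - n, h2, by omega⟩)))
    · exact Or.inl (Or.inr (Or.inl (by omega)))

lemma W_length {n : ℕ} (hn : 2 ≤ n) : (W n).length = 5*n - 4 := by
  have l2 : ∀ (g : ℕ → List ℕ), (∀ k, (g k).length = 2) →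
      ∀ m, ((range m).flatMap g).length = 2*m := by
    intro g hg m
    induction m with
    | zero => simp
    | succ m ih =>
      rw [range_succ, flatMap_append, flatMap_singleton, length_append, ih, hg]
      omega
  have e1 := l2 (fun k => [k, n+k]) (fun k => rfl) (n-1)
  have e3 := l2 (fun k => [n+k, k]) (fun k => rfl) (n-2)
  simp only [W, length_append, e1, e3, length_range, length_cons,
    length_singleton, length_nil]
  omega

def word (n : ℕ) [NeZero n] : List (Fin n × Fin 2) := (W n).map (dec n)

theorem represents {n : ℕ} (hn : 2 ≤ n) [NeZero n] :
    Represents ((⊤ : SimpleGraph (Fin n)) □ (⊤ : SimpleGraph (Fin 2))) (word n) := by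
  constructor
  · intro v
    have hv : v = dec n (enc n v) := (dec_enc v).symm
    rw [hv]
    exact List.mem_map_of_mem (W_mem hn (enc_lt v))
  · intro x y hxy
    have hX : enc n x < 2*n := enc_lt x
    have hY : enc n y < 2*n := enc_lt y
    have hXY : enc n x ≠ enc n y := fun h => hxy (by
      have h2 := congrArg (dec n) h
      rwa [dec_enc, dec_enc] at h2)
    have key : Alternates x y (word n) ↔
        Chain' (· ≠ ·) (filter (q (enc n x) (enc n y)) (W n)) := by
      unfold Alternates word
      simp only [List.Chain']
      rw [List.filter_map, List.isChain_map]
      have hfc : filter ((fun z => decide (z = x ∨ z = y)) ∘ dec n) (W n)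
          = filter (q (enc n x) (enc n y)) (W n) := by
        apply List.filter_congr
        intro k hk
        have hklt := W_lt hn k hk
        simp only [Function.comp_apply, q, decide_eq_decide]
        have e1 : dec n k = x ↔ k = enc n x :=
          ⟨fun h => by rw [← enc_dec hklt, h], fun h => by rw [h, dec_enc]⟩
        have e2 : dec n k = y ↔ k = enc n y :=
          ⟨fun h => by rw [← enc_dec hklt, h], fun h => by rw [h, dec_enc]⟩
        rw [e1, e2]
      rw [hfc]
      apply chain'_congr
      intro a ha b hb
      have ha' := (List.mem_filter.mp ha).2
      have hb' := (List.mem_filter.mp hb).2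
      simp only [q, decide_eq_true_eq] at ha' hb'
      constructor
      · intro hne h; exact hne (by rw [h])
      · intro hne heq
        rcases ha' with rfl | rfl <;> rcases hb' with rfl | rfl
        · exact hne rfl
        · rw [dec_enc, dec_enc] at heq; exact hxy heq
        · rw [dec_enc, dec_enc] at heq; exact hxy heq.symm
        · exact hne rfl
    rw [key, chainW hn hX hY hXY, SimpleGraph.boxProd_adj]
    obtain ⟨⟨a1, ha1⟩, ⟨c1, hc1⟩⟩ := x
    obtain ⟨⟨b1, hb1⟩, ⟨c2, hc2⟩⟩ := y
    simp only [SimpleGraph.top_adj, ne_eq, Prod.mk.injEq, Fin.mk.injEq, enc]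
    simp only [enc] at hXY
    interval_cases c1 <;> interval_cases c2 <;> simp_all <;> omega

end S12

theorem stmt12 (n : ℕ) (hn : 2 ≤ n) :
    reprLen ((⊤ : SimpleGraph (Fin n)) □ (⊤ : SimpleGraph (Fin 2))) ≤ 5 * n - 4 := by
  haveI : NeZero n := ⟨by omega⟩
  apply Nat.sInf_le
  exact ⟨S12.word n, S12.represents hn, by
    simp [S12.word, S12.W_length hn]⟩
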